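/- Let H be a Hopf algebra over a commutative ring k, R an H-module algebra, I an H-ideal of R, and x ∈ I an element that is H-regular in I (i.e., x = Σᵢ (hᵢ · x) bᵢ (hᵢ' · x) with all bᵢ ∈ I). Then the H-ideal of R generated by x coincides with the H-ideal of I generated by x; in particular R(H·x) ⊆ I(H·x) and (H·x)R ⊆ (H·x)I. -/

import Mathlib

open scoped TensorProduct

variable {k H R : Type*} [CommRing k] [Ring H] [HopfAlgebra k H]
  [NonUnitalRing R] [Module k R] [SMulCommClass k R R] [IsScalarTower k R R]

/-- `R` is an `H`-module algebra via the `k`-bilinear action `act`: the action is unital,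
makes `R` a left `H`-module, and satisfies `h · (a b) = ∑ (h₁ · a)(h₂ · b)`
(the right-hand side being the image of `Δ(h)` under `h₁ ⊗ h₂ ↦ (h₁ · a)(h₂ · b)`). -/
def IsModuleAlgebra (act : H →ₗ[k] R →ₗ[k] R) : Prop :=
  (∀ r : R, act 1 r = r) ∧
  (∀ (g h : H) (r : R), act (g * h) r = act g (act h r)) ∧
  (∀ (h : H) (a b : R),
    act h (a * b) =
      LinearMap.mul' k R
        (TensorProduct.map (act.flip a) (act.flip b) (Coalgebra.comul h)))

/-- `a` is `H`-(von Neumann) regular with middle factors taken from the set `S`: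
`a = ∑ᵢ (hᵢ · a) bᵢ (hᵢ' · a)` with all `bᵢ ∈ S`. -/
def IsHRegularIn (act : H →ₗ[k] R →ₗ[k] R) (S : Set R) (a : R) : Prop :=
  ∃ (n : ℕ) (h h' : Fin n → H) (b : Fin n → R),
    (∀ i, b i ∈ S) ∧ a = ∑ i, act (h i) a * b i * act (h' i) a

/-- `J` is an `H`-ideal of the `H`-module (sub)algebra `S` (take `S = Set.univ`
for `H`-ideals of `R` itself). -/
def IsHIdealIn (act : H →ₗ[k] R →ₗ[k] R) (S J : Set R) : Prop :=
  J ⊆ S ∧ (0 : R) ∈ J ∧ (∀ x ∈ J, ∀ y ∈ J, x - y ∈ J) ∧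
  (∀ (c : k), ∀ x ∈ J, c • x ∈ J) ∧
  (∀ s ∈ S, ∀ x ∈ J, s * x ∈ J ∧ x * s ∈ J) ∧
  (∀ (h : H), ∀ x ∈ J, act h x ∈ J)

/-- The `H`-ideal of `S` generated by `a`. -/
def HIdealGenIn (act : H →ₗ[k] R →ₗ[k] R) (S : Set R) (a : R) : Set R :=
  {x | ∀ J : Set R, IsHIdealIn act S J → a ∈ J → x ∈ J}

/-- The `H`-von Neumann regular radical `r_{Hn}` of the `H`-module (sub)algebra `S`:
those `a ∈ S` such that every element of the `H`-ideal of `S` generated by `a`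
is `H`-regular in `S`. -/
def rHnIn (act : H →ₗ[k] R →ₗ[k] R) (S : Set R) : Set R :=
  {a | a ∈ S ∧ ∀ x ∈ HIdealGenIn act S a, IsHRegularIn act S x}


set_option linter.unusedSectionVars false in
lemma fin_sum_of_mem_closure (S : Set R) (F : R → H → R) {z : R}
    (hz : z ∈ AddSubmonoid.closure {w : R | ∃ c ∈ S, ∃ g : H, w = F c g}) :
    ∃ (n : ℕ) (c : Fin n → R) (g : Fin n → H),
      (∀ i, c i ∈ S) ∧ z = ∑ i, F (c i) (g i) := by
  induction hz using AddSubmonoid.closure_induction with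
  | mem w hw =>
    obtain ⟨c, hc, g, rfl⟩ := hw
    exact ⟨1, fun _ => c, fun _ => g, fun _ => hc, by simp⟩
  | zero => exact ⟨0, ![], ![], by simp, by simp⟩
  | add a b _ _ iha ihb =>
    obtain ⟨n, c, g, hc, rfl⟩ := iha
    obtain ⟨m, c2, g2, hc2, rfl⟩ := ihb
    refine ⟨n + m, Fin.append c c2, Fin.append g g2, ?_, ?_⟩
    · intro i
      refine Fin.addCases (fun j => ?_) (fun j => ?_) i <;>
        simp [Fin.append_left, Fin.append_right, hc, hc2]
    · rw [Fin.sum_univ_add]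
      simp [Fin.append_left, Fin.append_right]

set_option linter.unusedSectionVars false in
lemma expand_aux (act : H →ₗ[k] R →ₗ[k] R) (hma : IsModuleAlgebra act) (h : H) (u v : R) :
    ∃ s : Finset (H × H), act h (u * v) = ∑ p ∈ s, act p.1 u * act p.2 v := by
  obtain ⟨s, hs⟩ := TensorProduct.exists_finset (Coalgebra.comul (R := k) h)
  refine ⟨s, ?_⟩
  rw [hma.2.2, hs, map_sum, map_sum]
  simp [LinearMap.mul'_apply]

section Main
variable (act : H →ₗ[k] R →ₗ[k] R) (I : Set R) (x : R)

def genSet : Set R :=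
  {w | ∃ g : H, w = act g x} ∪ {w | ∃ c ∈ I, ∃ g : H, w = c * act g x} ∪
  {w | ∃ c ∈ I, ∃ g : H, w = act g x * c} ∪
  {w | ∃ c ∈ I, ∃ c' ∈ I, ∃ g : H, w = c * act g x * c'}

variable {act I x}

lemma mem1 (g : H) : act g x ∈ genSet act I x := Or.inl (Or.inl (Or.inl ⟨g, rfl⟩))
lemma mem2 {c : R} (hc : c ∈ I) (g : H) : c * act g x ∈ genSet act I x :=
  Or.inl (Or.inl (Or.inr ⟨c, hc, g, rfl⟩))
lemma mem3 {c : R} (hc : c ∈ I) (g : H) : act g x * c ∈ genSet act I x :=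
  Or.inl (Or.inr ⟨c, hc, g, rfl⟩)
lemma mem4 {c c' : R} (hc : c ∈ I) (hc' : c' ∈ I) (g : H) :
    c * act g x * c' ∈ genSet act I x := Or.inr ⟨c, hc, c', hc', g, rfl⟩

variable (hma : IsModuleAlgebra act) (hI : IsHIdealIn act Set.univ I)
  (hx : x ∈ I) (hreg : IsHRegularIn act I x)

include hma hI hreg in
lemma keyL (r : R) (h : H) :
    r * act h x ∈ AddSubmonoid.closure {w : R | ∃ c ∈ I, ∃ g : H, w = c * act g x} := by
  obtain ⟨n, hh, hh', b, hbI, hxeq⟩ := hreg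
  have hmem : ∀ i, act (hh i) x * b i ∈ I :=
    fun i => (hI.2.2.2.2.1 _ (Set.mem_univ _) _ (hbI i)).1
  have hax : act h x = ∑ i, act h (act (hh i) x * b i * act (hh' i) x) := by
    conv_lhs => rw [hxeq, map_sum]
  rw [hax, Finset.mul_sum]
  refine AddSubmonoid.sum_mem _ (fun i _ => ?_)
  obtain ⟨s, hs⟩ := expand_aux act hma h (act (hh i) x * b i) (act (hh' i) x)
  rw [hs, Finset.mul_sum]
  refine AddSubmonoid.sum_mem _ (fun p _ => ?_)
  refine AddSubmonoid.subset_closure ⟨r * act p.1 (act (hh i) x * b i),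
    (hI.2.2.2.2.1 _ (Set.mem_univ _) _ (hI.2.2.2.2.2 _ _ (hmem i))).1, p.2 * hh' i, ?_⟩
  rw [mul_assoc, hma.2.1]

include hma hI hreg in
lemma keyR (r : R) (h : H) :
    act h x * r ∈ AddSubmonoid.closure {w : R | ∃ c ∈ I, ∃ g : H, w = act g x * c} := by
  obtain ⟨n, hh, hh', b, hbI, hxeq⟩ := hreg
  have hmem : ∀ i, b i * act (hh' i) x ∈ I :=
    fun i => (hI.2.2.2.2.1 _ (Set.mem_univ _) _ (hbI i)).2
  have hax : act h x = ∑ i, act h (act (hh i) x * (b i * act (hh' i) x)) := by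
    conv_lhs => rw [hxeq, map_sum]
    exact Finset.sum_congr rfl (fun i _ => by rw [mul_assoc])
  rw [hax, Finset.sum_mul]
  refine AddSubmonoid.sum_mem _ (fun i _ => ?_)
  obtain ⟨s, hs⟩ := expand_aux act hma h (act (hh i) x) (b i * act (hh' i) x)
  rw [hs, Finset.sum_mul]
  refine AddSubmonoid.sum_mem _ (fun p _ => ?_)
  refine AddSubmonoid.subset_closure ⟨act p.2 (b i * act (hh' i) x) * r,
    (hI.2.2.2.2.1 _ (Set.mem_univ _) _ (hI.2.2.2.2.2 _ _ (hmem i))).2, p.1 * hh i, ?_⟩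
  rw [mul_assoc, hma.2.1]

lemma closureL_le : AddSubmonoid.closure {w : R | ∃ c ∈ I, ∃ g : H, w = c * act g x} ≤
    (Submodule.span k (genSet act I x)).toAddSubmonoid :=
  AddSubmonoid.closure_le.2 (fun w ⟨c, hc, g, hw⟩ => hw ▸ Submodule.subset_span (mem2 hc g))

lemma closureR_le : AddSubmonoid.closure {w : R | ∃ c ∈ I, ∃ g : H, w = act g x * c} ≤
    (Submodule.span k (genSet act I x)).toAddSubmonoid :=
  AddSubmonoid.closure_le.2 (fun w ⟨c, hc, g, hw⟩ => hw ▸ Submodule.subset_span (mem3 hc g))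

lemma closure_mul_right {c : R} (hc : c ∈ I) {z : R}
    (hz : z ∈ AddSubmonoid.closure {w : R | ∃ c ∈ I, ∃ g : H, w = c * act g x}) :
    z * c ∈ Submodule.span k (genSet act I x) := by
  induction hz using AddSubmonoid.closure_induction with
  | mem w hw =>
    obtain ⟨c₁, hc₁, g₁, rfl⟩ := hw
    exact Submodule.subset_span (mem4 hc₁ hc g₁)
  | zero => simp
  | add a b _ _ iha ihb => rw [add_mul]; exact Submodule.add_mem _ iha ihb

lemma closure_mul_left {c : R} (hc : c ∈ I) {z : R}
    (hz : z ∈ AddSubmonoid.closure {w : R | ∃ c ∈ I, ∃ g : H, w = act g x * c}) :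
    c * z ∈ Submodule.span k (genSet act I x) := by
  induction hz using AddSubmonoid.closure_induction with
  | mem w hw =>
    obtain ⟨c₁, hc₁, g₁, rfl⟩ := hw
    rw [← mul_assoc]
    exact Submodule.subset_span (mem4 hc hc₁ g₁)
  | zero => simp
  | add a b _ _ iha ihb => rw [mul_add]; exact Submodule.add_mem _ iha ihb

include hma hI hreg in
lemma spanMulL (r : R) {z : R} (hz : z ∈ Submodule.span k (genSet act I x)) :
    r * z ∈ Submodule.span k (genSet act I x) := by
  induction hz using Submodule.span_induction with
  | mem w hw =>
    rcases hw with ((⟨g, rfl⟩ | ⟨c, hc, g, rfl⟩) | ⟨c, hc, g, rfl⟩) | ⟨c, hc, c', hc', g, rfl⟩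
    · exact closureL_le (keyL hma hI hreg r g)
    · rw [← mul_assoc]
      exact Submodule.subset_span (mem2 (hI.2.2.2.2.1 _ (Set.mem_univ _) _ hc).1 g)
    · rw [← mul_assoc]
      exact closure_mul_right hc (keyL hma hI hreg r g)
    · rw [← mul_assoc, ← mul_assoc]
      exact Submodule.subset_span (mem4 (hI.2.2.2.2.1 _ (Set.mem_univ _) _ hc).1 hc' g)
  | zero => simp
  | add a b _ _ iha ihb => rw [mul_add]; exact Submodule.add_mem _ iha ihb
  | smul c a _ ih => rw [mul_smul_comm]; exact Submodule.smul_mem _ _ ih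

include hma hI hreg in
lemma spanMulR (r : R) {z : R} (hz : z ∈ Submodule.span k (genSet act I x)) :
    z * r ∈ Submodule.span k (genSet act I x) := by
  induction hz using Submodule.span_induction with
  | mem w hw =>
    rcases hw with ((⟨g, rfl⟩ | ⟨c, hc, g, rfl⟩) | ⟨c, hc, g, rfl⟩) | ⟨c, hc, c', hc', g, rfl⟩
    · exact closureR_le (keyR hma hI hreg r g)
    · rw [mul_assoc]
      exact closure_mul_left hc (keyR hma hI hreg r g)
    · rw [mul_assoc]
      exact Submodule.subset_span (mem3 (hI.2.2.2.2.1 _ (Set.mem_univ _) _ hc).2 g)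
    · rw [mul_assoc]
      exact Submodule.subset_span (mem4 hc (hI.2.2.2.2.1 r (Set.mem_univ r) c' hc').2 g)
  | zero => simp
  | add a b _ _ iha ihb => rw [add_mul]; exact Submodule.add_mem _ iha ihb
  | smul c a _ ih => rw [smul_mul_assoc]; exact Submodule.smul_mem _ _ ih

include hma hI in
lemma spanAct (h' : H) {z : R} (hz : z ∈ Submodule.span k (genSet act I x)) :
    act h' z ∈ Submodule.span k (genSet act I x) := by
  induction hz using Submodule.span_induction with
  | mem w hw =>
    rcases hw with ((⟨g, rfl⟩ | ⟨c, hc, g, rfl⟩) | ⟨c, hc, g, rfl⟩) | ⟨c, hc, c', hc', g, rfl⟩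
    · rw [← hma.2.1]; exact Submodule.subset_span (mem1 _)
    · obtain ⟨s, hs⟩ := expand_aux act hma h' c (act g x)
      rw [hs]
      refine Submodule.sum_mem _ (fun p _ => ?_)
      rw [← hma.2.1]
      exact Submodule.subset_span (mem2 (hI.2.2.2.2.2 _ _ hc) _)
    · obtain ⟨s, hs⟩ := expand_aux act hma h' (act g x) c
      rw [hs]
      refine Submodule.sum_mem _ (fun p _ => ?_)
      rw [← hma.2.1]
      exact Submodule.subset_span (mem3 (hI.2.2.2.2.2 _ _ hc) _)
    · rw [mul_assoc]
      obtain ⟨s, hs⟩ := expand_aux act hma h' c (act g x * c')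
      rw [hs]
      refine Submodule.sum_mem _ (fun p _ => ?_)
      obtain ⟨t, ht⟩ := expand_aux act hma p.2 (act g x) c'
      rw [ht, Finset.mul_sum]
      refine Submodule.sum_mem _ (fun q _ => ?_)
      rw [← mul_assoc, ← hma.2.1]
      exact Submodule.subset_span
        (mem4 (hI.2.2.2.2.2 _ _ hc) (hI.2.2.2.2.2 _ _ hc') _)
  | zero => simp
  | add a b _ _ iha ihb => rw [map_add]; exact Submodule.add_mem _ iha ihb
  | smul c a _ ih => rw [map_smul]; exact Submodule.smul_mem _ _ ih

include hI hreg in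
lemma x_mem_span : x ∈ Submodule.span k (genSet act I x) := by
  obtain ⟨n, hh, hh', b, hbI, hxeq⟩ := hreg
  have hsum : (∑ i, act (hh i) x * b i * act (hh' i) x) ∈
      Submodule.span k (genSet act I x) := by
    refine Submodule.sum_mem _ (fun i _ => ?_)
    rw [mul_assoc]
    exact Submodule.subset_span (mem3 (hI.2.2.2.2.1 _ (Set.mem_univ _) _ (hbI i)).2 _)
  simpa only [← hxeq] using hsum

lemma span_le_J {J : Set R} (hJ : IsHIdealIn act I J) (hxJ : x ∈ J) :
    (Submodule.span k (genSet act I x) : Set R) ⊆ J := by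
  intro z hz
  induction hz using Submodule.span_induction with
  | mem w hw =>
    rcases hw with ((⟨g, rfl⟩ | ⟨c, hc, g, rfl⟩) | ⟨c, hc, g, rfl⟩) | ⟨c, hc, c', hc', g, rfl⟩
    · exact hJ.2.2.2.2.2 g _ hxJ
    · exact (hJ.2.2.2.2.1 _ hc _ (hJ.2.2.2.2.2 g _ hxJ)).1
    · exact (hJ.2.2.2.2.1 _ hc _ (hJ.2.2.2.2.2 g _ hxJ)).2
    · exact (hJ.2.2.2.2.1 _ hc' _ ((hJ.2.2.2.2.1 _ hc _ (hJ.2.2.2.2.2 g _ hxJ)).1)).2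
  | zero => exact hJ.2.1
  | add a b _ _ iha ihb =>
    have h0b : (0 : R) - b ∈ J := hJ.2.2.1 _ hJ.2.1 _ ihb
    have := hJ.2.2.1 _ iha _ h0b
    rwa [zero_sub, sub_neg_eq_add] at this
  | smul c a _ ih => exact hJ.2.2.2.1 c _ ih

end Main

/-!
Let `H` be a Hopf algebra over a commutative ring `k`, `R` an `H`-module algebra, `I` an
`H`-ideal of `R`, and `x ∈ I` an element that is `H`-regular in `I`
(i.e. `x = ∑ᵢ (hᵢ · x) bᵢ (hᵢ' · x)` with all `bᵢ ∈ I`).  Then the `H`-ideal of `R`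
generated by `x` coincides with the `H`-ideal of `I` generated by `x`; in particular
`R (H·x) ⊆ I (H·x)` and `(H·x) R ⊆ (H·x) I` (as sets of finite sums of such products).
-/
theorem hIdealGen_eq_of_isHRegularIn
    (act : H →ₗ[k] R →ₗ[k] R) (hma : IsModuleAlgebra act)
    (I : Set R) (hI : IsHIdealIn act Set.univ I)
    (x : R) (hx : x ∈ I) (hreg : IsHRegularIn act I x) :
    HIdealGenIn act Set.univ x = HIdealGenIn act I x ∧
    (∀ (r : R) (h : H), ∃ (n : ℕ) (c : Fin n → R) (g : Fin n → H),
      (∀ i, c i ∈ I) ∧ r * act h x = ∑ i, c i * act (g i) x) ∧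
    (∀ (r : R) (h : H), ∃ (n : ℕ) (c : Fin n → R) (g : Fin n → H),
      (∀ i, c i ∈ I) ∧ act h x * r = ∑ i, act (g i) x * c i) := by
  have hTideal : IsHIdealIn act Set.univ
      ((Submodule.span k (genSet act I x) : Submodule k R) : Set R) :=
    ⟨Set.subset_univ _, Submodule.zero_mem _,
     fun a ha b hb => Submodule.sub_mem _ ha hb,
     fun c a ha => Submodule.smul_mem _ c ha,
     fun s _ a ha => ⟨spanMulL hma hI hreg s ha, spanMulR hma hI hreg s ha⟩,
     fun h a ha => spanAct hma hI h ha⟩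
  refine ⟨?_, ?_, ?_⟩
  · ext y
    simp only [HIdealGenIn, Set.mem_setOf_eq]
    constructor
    · intro hy J hJ hxJ
      exact span_le_J hJ hxJ (hy _ hTideal (x_mem_span hI hreg))
    · intro hy J hJ hxJ
      have hJI : IsHIdealIn act I (J ∩ I) := by
        refine ⟨Set.inter_subset_right, ⟨hJ.2.1, hI.2.1⟩,
          fun a ha b hb => ⟨hJ.2.2.1 _ ha.1 _ hb.1, hI.2.2.1 _ ha.2 _ hb.2⟩,
          fun c a ha => ⟨hJ.2.2.2.1 c _ ha.1, hI.2.2.2.1 c _ ha.2⟩,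
          fun s hs a ha => ?_, fun h a ha => ⟨hJ.2.2.2.2.2 h _ ha.1, hI.2.2.2.2.2 h _ ha.2⟩⟩
        exact ⟨⟨(hJ.2.2.2.2.1 s (Set.mem_univ s) _ ha.1).1,
                (hI.2.2.2.2.1 s (Set.mem_univ s) _ ha.2).1⟩,
               ⟨(hJ.2.2.2.2.1 s (Set.mem_univ s) _ ha.1).2,
                (hI.2.2.2.2.1 s (Set.mem_univ s) _ ha.2).2⟩⟩
      exact (hy _ hJI ⟨hxJ, hx⟩).1
  · intro r h
    exact fin_sum_of_mem_closure I (fun c g => c * act g x) (keyL hma hI hreg r h)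
  · intro r h
    exact fin_sum_of_mem_closure I (fun c g => act g x * c) (keyR hma hI hreg r h)
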